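/- Let X, Y be finite totally ordered sets and u : X × Y → ℝ strictly supermodular. Then for any probability distributions ρ ∈ Δ(X) and φ ∈ Δ(Y), any solution γ of the optimal transport problem max ∑ u dγ subject to marginals (ρ, φ) has co-monotone support: (x,y),(x',y') ∈ supp(γ) and x > x' imply y ≥ y'. -/
import Mathlib


/-- γ is a probability distribution on a finite type. -/
def IsDist {Z : Type*} [Fintype Z] (γ : Z → ℝ) : Prop :=
  (∀ z, 0 ≤ γ z) ∧ ∑ z, γ z = 1

/-- u is strictly supermodular. -/
def StrictSupermod {X Y : Type*} [LT X] [LT Y] (u : X → Y → ℝ) : Prop :=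
  ∀ x x' y y', x' < x → y' < y → u x y' + u x' y < u x y + u x' y'

/-- A set is co-monotone. -/
def CoMono {X Y : Type*} [LT X] [LE Y] (S : Set (X × Y)) : Prop :=
  ∀ p ∈ S, ∀ q ∈ S, q.1 < p.1 → q.2 ≤ p.2

/-- For strictly supermodular u, any solution of the optimal transport problem with marginals
(ρ, φ) has co-monotone support. -/
theorem stmt17 {X Y : Type*} [Fintype X] [Fintype Y] [LinearOrder X] [LinearOrder Y]
    (u : X → Y → ℝ) (hu : StrictSupermod u)
    (ρ : X → ℝ) (φ : Y → ℝ) (hρ : IsDist ρ) (hφ : IsDist φ)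
    (γ : X × Y → ℝ) (hγ : IsDist γ)
    (hmx : ∀ x, ∑ y, γ (x, y) = ρ x) (hmy : ∀ y, ∑ x, γ (x, y) = φ y)
    (hopt : ∀ γ' : X × Y → ℝ, IsDist γ' →
      (∀ x, ∑ y, γ' (x, y) = ρ x) → (∀ y, ∑ x, γ' (x, y) = φ y) →
      ∑ p : X × Y, u p.1 p.2 * γ' p ≤ ∑ p : X × Y, u p.1 p.2 * γ p) :
    CoMono {p : X × Y | 0 < γ p} := by
  rintro ⟨a, b⟩ hp ⟨c, d⟩ hq hlt
  by_contra hbd'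
  push_neg at hbd'
  simp only [Set.mem_setOf_eq] at hp hq
  simp only at hlt hbd'
  -- hlt : c < a, hbd' : b < d
  have hca : c ≠ a := ne_of_lt hlt
  have hac : a ≠ c := ne_of_gt hlt
  have hbd : b ≠ d := ne_of_lt hbd'
  have hdb : d ≠ b := ne_of_gt hbd'
  set ε : ℝ := min (γ (a, b)) (γ (c, d)) with hε
  have hεpos : 0 < ε := lt_min hp hq
  set δ : X × Y → ℝ := fun p =>
    (if p = (a, d) then (1:ℝ) else 0) + (if p = (c, b) then 1 else 0)
      - (if p = (a, b) then 1 else 0) - (if p = (c, d) then 1 else 0) with hδ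
  set γ' : X × Y → ℝ := fun p => γ p + ε * δ p with hγ'
  have key : ∀ f : X × Y → ℝ,
      ∑ p, f p * γ' p = ∑ p, f p * γ p + ε * (f (a,d) + f (c,b) - f (a,b) - f (c,d)) := by
    intro f
    have expand : ∀ p : X × Y, f p * γ' p = f p * γ p
        + ε * ((if p = (a,d) then f p else 0) + (if p = (c,b) then f p else 0)
          - (if p = (a,b) then f p else 0) - (if p = (c,d) then f p else 0)) := by
      intro p
      simp only [hγ', hδ]
      split_ifs <;> ring
    rw [Finset.sum_congr rfl (fun p _ => expand p), Finset.sum_add_distrib, ← Finset.mul_sum]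
    congr 2
    rw [Finset.sum_sub_distrib, Finset.sum_sub_distrib, Finset.sum_add_distrib]
    simp [Finset.sum_ite_eq']
  have hδmx : ∀ x, ∑ y, δ (x, y) = 0 := by
    intro x
    simp only [hδ, Prod.mk.injEq]
    rw [Finset.sum_sub_distrib, Finset.sum_sub_distrib, Finset.sum_add_distrib]
    by_cases hxa : x = a <;> by_cases hxc : x = c <;>
      simp [hxa, hxc, Finset.sum_ite_eq', hca, hac]
  have hδmy : ∀ y, ∑ x, δ (x, y) = 0 := by
    intro y
    simp only [hδ, Prod.mk.injEq]
    rw [Finset.sum_sub_distrib, Finset.sum_sub_distrib, Finset.sum_add_distrib]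
    by_cases hyb : y = b <;> by_cases hyd : y = d <;>
      simp [hyb, hyd, Finset.sum_ite_eq', hbd, hdb]
  have hγ'mx : ∀ x, ∑ y, γ' (x, y) = ρ x := by
    intro x
    simp only [hγ', Finset.sum_add_distrib, ← Finset.mul_sum, hδmx, hmx, mul_zero, add_zero]
  have hγ'my : ∀ y, ∑ x, γ' (x, y) = φ y := by
    intro y
    simp only [hγ', Finset.sum_add_distrib, ← Finset.mul_sum, hδmy, hmy, mul_zero, add_zero]
  have hγ'dist : IsDist γ' := by
    constructor
    · intro p
      show 0 ≤ γ p + ε * δ p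
      by_cases h3 : p = (a,b)
      · have hδv : δ p = -1 := by
          simp [hδ, h3, Prod.mk.injEq, hbd, hac]
        rw [h3] at *
        rw [hδv]
        have := min_le_left (γ (a,b)) (γ (c,d))
        linarith
      · by_cases h4 : p = (c,d)
        · have hδv : δ p = -1 := by
            simp [hδ, h4, Prod.mk.injEq, hca, hdb]
          rw [h4] at *
          rw [hδv]
          have := min_le_right (γ (a,b)) (γ (c,d))
          linarith
        · have hδnn : 0 ≤ δ p := by
            simp only [hδ, h3, h4, if_false]
            split_ifs <;> norm_num
          have h0 := hγ.1 p
          nlinarith [mul_nonneg hεpos.le hδnn]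
    · rw [Fintype.sum_prod_type]
      simp only [hγ'mx]
      exact hρ.2
  have hle := hopt γ' hγ'dist hγ'mx hγ'my
  rw [key (fun p => u p.1 p.2)] at hle
  simp only at hle
  have hsup := hu a c d b hlt hbd'
  nlinarith
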